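/- arXiv:1503.00050 — 3 statements merged into one kernel-verified Lean document; each statement's English description precedes it below -/
import Mathlib

section
/- Let 1<p<∞ and let a,b ∈ L^∞(𝕋) with ã invertible in L^∞(𝕋). Set ℛ := diag(T(a)+H(b), T(a)−H(b)) on H^p(𝕋)×H^p(𝕋). Let y = (g,h)^T ∈ H^p(𝕋)×H^p(𝕋). If x₀ = (φ,ψ)^T ∈ H^p(𝕋)×H^p(𝕋) satisfies ℛx₀ = y, then the element X₀ := (φ+ψ, P(b̃(φ+ψ) + ã·J(φ−ψ)))^T satisfies 𝒫V(a,b)𝒫 X₀ = Y, where Y := 𝒫A₂^{-1}A₁^{-1}𝒥^{-1}y. -/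
open MeasureTheory Complex Real BigOperators
open scoped ENNReal

noncomputable section

instance fact2pi : Fact (0 < 2 * π) := ⟨by positivity⟩

/-- The unit circle, modelled additively as `ℝ / 2πℤ`. -/
abbrev UC : Type := AddCircle (2 * π)

/-- Normalized arc-length (Haar) measure on the circle. -/
abbrev volUC : Measure UC := volume

/-- The Lebesgue space `L^p(𝕋)`. -/
abbrev LpC (p : ℝ≥0∞) : Type := Lp ℂ p volUC

/-- The reflection `ã(t) := a(1/t)` (in additive coordinates, `t ↦ -t`). -/
def tildeF (a : UC → ℂ) : UC → ℂ := fun t => a (-t)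

/-- The function `t ↦ t^n` on the circle (in additive coordinates, `fourier n`). -/
def tpow (n : ℤ) : UC → ℂ := fun t => fourier n t

/-- The first function `c := b̃·ã⁻¹` of the subordinated pair (here `atinv` denotes `ã⁻¹`). -/
def subC (b atinv : UC → ℂ) : UC → ℂ := fun t => tildeF b t * atinv t

/-- The second function `d := b·ã⁻¹` of the subordinated pair. -/
def subD (b atinv : UC → ℂ) : UC → ℂ := fun t => b t * atinv t

/-- The basic operators on `L^p(𝕋)`: the Riesz projection `P` (characterized by its action on
Fourier coefficients), the flip `J`, `(Jf)(t) = t⁻¹ f(1/t)` (characterized on Fourier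
coefficients by `n ↦ -n-1`), and the multiplication operators `M a` for `a ∈ L^∞`. -/
structure CircleOps (p : ℝ≥0∞) [Fact (1 ≤ p)] where
  P : LpC p →L[ℂ] LpC p
  J : LpC p →L[ℂ] LpC p
  M : (UC → ℂ) → LpC p →L[ℂ] LpC p
  P_spec : ∀ (f : LpC p) (n : ℤ),
    fourierCoeff (⇑(P f)) n = if 0 ≤ n then fourierCoeff (⇑f) n else 0
  J_spec : ∀ (f : LpC p) (n : ℤ),
    fourierCoeff (⇑(J f)) n = fourierCoeff (⇑f) (-n - 1)
  M_spec : ∀ (a : UC → ℂ), MemLp a ⊤ volUC →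
    ∀ f : LpC p, ⇑(M a f) =ᵐ[volUC] fun t => a t * f t

/-- The Hardy space `H^p(𝕋)`, as the subset of `L^p(𝕋)` of functions whose negatively indexed
Fourier coefficients vanish. -/
def HardyS (p : ℝ≥0∞) [Fact (1 ≤ p)] : Set (LpC p) :=
  {f | ∀ n : ℤ, n < 0 → fourierCoeff (⇑f) n = 0}

/-- A `2×2` operator matrix acting on `E × E`. -/
def mat2 {E : Type*} [NormedAddCommGroup E] [NormedSpace ℂ E]
    (A B C D : E →L[ℂ] E) : (E × E) →L[ℂ] (E × E) :=
  ((A ∘L ContinuousLinearMap.fst ℂ E E) + (B ∘L ContinuousLinearMap.snd ℂ E E)).prod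
    ((C ∘L ContinuousLinearMap.fst ℂ E E) + (D ∘L ContinuousLinearMap.snd ℂ E E))

namespace CircleOps

variable {p : ℝ≥0∞} [Fact (1 ≤ p)] (O : CircleOps p)

/-- `Q := I - P`. -/
def Q : LpC p →L[ℂ] LpC p := ContinuousLinearMap.id ℂ (LpC p) - O.P

/-- The Toeplitz operator `T(a) := P a P`. -/
def Toep (a : UC → ℂ) : LpC p →L[ℂ] LpC p := O.P ∘L O.M a ∘L O.P

/-- The Hankel operator `H(b) := P b Q J`. -/
def Hank (b : UC → ℂ) : LpC p →L[ℂ] LpC p := O.P ∘L O.M b ∘L O.Q ∘L O.J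

/-- `ℛ := diag(T(a)+H(b), T(a)-H(b))`. -/
def Rdiag (a b : UC → ℂ) : (LpC p × LpC p) →L[ℂ] (LpC p × LpC p) :=
  mat2 (O.Toep a + O.Hank b) 0 0 (O.Toep a - O.Hank b)

/-- `𝒫 := diag(P,P)`. -/
def PP : (LpC p × LpC p) →L[ℂ] (LpC p × LpC p) := mat2 O.P 0 0 O.P

/-- `𝒬 := diag(Q,Q)`. -/
def QQ : (LpC p × LpC p) →L[ℂ] (LpC p × LpC p) := mat2 O.Q 0 0 O.Q

/-- `𝒥 := (1/2)[[I,J],[I,-J]]`. -/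
def Jop : (LpC p × LpC p) →L[ℂ] (LpC p × LpC p) :=
  (2:ℂ)⁻¹ • mat2 (ContinuousLinearMap.id ℂ (LpC p)) O.J (ContinuousLinearMap.id ℂ (LpC p)) (-O.J)

/-- `𝒥⁻¹ = [[I,I],[J,-J]]`. -/
def Jinv : (LpC p × LpC p) →L[ℂ] (LpC p × LpC p) :=
  mat2 (ContinuousLinearMap.id ℂ (LpC p)) (ContinuousLinearMap.id ℂ (LpC p)) O.J (-O.J)

/-- `T(V(a,b)) = 𝒫 V(a,b) 𝒫`, where `V(a,b) = [[a - b b̃ ã⁻¹, b ã⁻¹],[-b̃ ã⁻¹, ã⁻¹]]`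
(`atinv` denotes `ã⁻¹`). -/
def TV (a b atinv : UC → ℂ) : (LpC p × LpC p) →L[ℂ] (LpC p × LpC p) :=
  mat2 (O.Toep fun t => a t - b t * tildeF b t * atinv t)
    (O.Toep fun t => b t * atinv t)
    (O.Toep fun t => -(tildeF b t * atinv t))
    (O.Toep atinv)

/-- `𝒫 V(a,b) 𝒬`. -/
def PVQ (a b atinv : UC → ℂ) : (LpC p × LpC p) →L[ℂ] (LpC p × LpC p) :=
  mat2 (O.P ∘L O.M (fun t => a t - b t * tildeF b t * atinv t) ∘L O.Q)
    (O.P ∘L O.M (fun t => b t * atinv t) ∘L O.Q)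
    (O.P ∘L O.M (fun t => -(tildeF b t * atinv t)) ∘L O.Q)
    (O.P ∘L O.M atinv ∘L O.Q)

/-- `A₁ := I - diag(P,Q)·[[a,b],[b̃,ã]]·diag(Q,P)`. -/
def A1 (a b : UC → ℂ) : (LpC p × LpC p) →L[ℂ] (LpC p × LpC p) :=
  ContinuousLinearMap.id ℂ (LpC p × LpC p) -
    mat2 (O.P ∘L O.M a ∘L O.Q) (O.P ∘L O.M b ∘L O.P)
      (O.Q ∘L O.M (tildeF b) ∘L O.Q) (O.Q ∘L O.M (tildeF a) ∘L O.P)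

/-- `A₂ := I + 𝒫 V(a,b) 𝒬`. -/
def A2 (a b atinv : UC → ℂ) : (LpC p × LpC p) →L[ℂ] (LpC p × LpC p) :=
  ContinuousLinearMap.id ℂ (LpC p × LpC p) + O.PVQ a b atinv

/-- The operator `W φ := T_r⁻¹(c) T(ã⁻¹) φ - J Q c P T_r⁻¹(c) T(ã⁻¹) φ + J Q ã⁻¹ φ`,
where `Trc` is (the chosen right inverse) `T_r⁻¹(c)`. -/
def Wop (c atinv : UC → ℂ) (Trc : LpC p →L[ℂ] LpC p) : LpC p →L[ℂ] LpC p :=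
  Trc ∘L O.Toep atinv
    - O.J ∘L O.Q ∘L O.M c ∘L O.P ∘L Trc ∘L O.Toep atinv
    + O.J ∘L O.Q ∘L O.M atinv

/-- The particular solution
`Tc T(ã⁻¹) Td f - J Q c Tc T(ã⁻¹) Td f + J Q ã⁻¹ Td f`, where `Tc`, `Td` are
(one-sided) inverses of `T(c)`, `T(d)`. -/
def baseSol (c atinv : UC → ℂ) (Tc Td : LpC p →L[ℂ] LpC p) (f : LpC p) : LpC p :=
  Tc (O.Toep atinv (Td f)) - O.J (O.Q (O.M c (Tc (O.Toep atinv (Td f)))))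
    + O.J (O.Q (O.M atinv (Td f)))

end CircleOps

/-- Wiener–Hopf factorization data for `g` in the sense of the paper:
`g = g₋ t^n g₊` with `n = -ind` (so `ind = ind T(g)`), together with the membership and
normalization conditions.  (For simplicity all factors are taken essentially bounded.) -/
structure WHFact (g : UC → ℂ) where
  ind : ℤ
  gp : UC → ℂ
  gm : UC → ℂ
  gpInv : UC → ℂ
  gmInv : UC → ℂ
  hgp : MemLp gp ⊤ volUC
  hgm : MemLp gm ⊤ volUC
  hgpInv : MemLp gpInv ⊤ volUC
  hgmInv : MemLp gmInv ⊤ volUC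
  hp_inv : ∀ᵐ t ∂volUC, gp t * gpInv t = 1
  hm_inv : ∀ᵐ t ∂volUC, gm t * gmInv t = 1
  hfact : ∀ᵐ t ∂volUC, g t = gm t * tpow (-ind) t * gp t
  hgpH : ∀ n : ℤ, n < 0 → fourierCoeff gp n = 0
  hgpInvH : ∀ n : ℤ, n < 0 → fourierCoeff gpInv n = 0
  hgmH : ∀ n : ℤ, 0 < n → fourierCoeff gm n = 0
  hgmInvH : ∀ n : ℤ, 0 < n → fourierCoeff gmInv n = 0
  hgmInfty : fourierCoeff gm 0 = 1

/-- The right inverse `T_r⁻¹(g) := T(g₊⁻¹) T(g₋⁻¹) T(t^{-n})`, `n = -ind ≤ 0`. -/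
def WHFact.Tr {g : UC → ℂ} (F : WHFact g) {p : ℝ≥0∞} [Fact (1 ≤ p)] (O : CircleOps p) :
    LpC p →L[ℂ] LpC p :=
  O.Toep F.gpInv ∘L O.Toep F.gmInv ∘L O.Toep (tpow F.ind)

/-- The left inverse `T_l⁻¹(g) := T(t^{-n}) T(g₊⁻¹) T(g₋⁻¹)`, `n = -ind ≥ 0`. -/
def WHFact.Tl {g : UC → ℂ} (F : WHFact g) {p : ℝ≥0∞} [Fact (1 ≤ p)] (O : CircleOps p) :
    LpC p →L[ℂ] LpC p :=
  O.Toep (tpow F.ind) ∘L O.Toep F.gpInv ∘L O.Toep F.gmInv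

/-- The number of kernel basis functions `u_0, …, u_{κ(i)}`: `m` if `κ = 2m`, `m+1` if
`κ = 2m+1`. -/
def numU (κ : ℤ) : ℕ := ((κ + 1) / 2).toNat

/-- The functions `u_k^{(κ(s),±)}`: for `κ = 2m`, `u_k(t) = t^{m-k-1} ± σ t^{m+k}`; for
`κ = 2m+1`, `u_k(t) = t^{m+k} ± σ t^{m-k}`.  Here `sgn = ±1`, and `σ` is the factorization
signature. -/
def ubasis (κ : ℤ) (σ sgn : ℂ) (k : ℕ) : UC → ℂ :=
  if κ % 2 = 0 then
    fun t => fourier (κ / 2 - (k:ℤ) - 1) t + sgn * σ * fourier (κ / 2 + (k:ℤ)) t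
  else
    fun t => fourier (κ / 2 + (k:ℤ)) t + sgn * σ * fourier (κ / 2 - (k:ℤ)) t

/-- `sign(r)`: `0` if `r = 0` and `1` if `r > 0` (as a complex scalar). -/
def sgnInd (κ : ℤ) : ℂ := if κ = 0 then 0 else 1


section Aux
open Set Filter Topology AddCircle
open scoped NNReal

abbrev haarUC : Measure UC := @haarAddCircle (2 * π) _

lemma twopi_ennreal_ne : ENNReal.ofReal (2 * π) ≠ 0 := by
  simp [ENNReal.ofReal_eq_zero, not_le]
  positivity

lemma haar_ae_eq : ae (volUC : Measure UC) = ae haarUC := by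
  have h := (volume_eq_smul_haarAddCircle (T := 2 * π))
  calc ae (volUC : Measure UC) = ae (ENNReal.ofReal (2 * π) • haarUC) := by rw [← h]
    _ = ae haarUC := Measure.ae_ennreal_smul_measure_eq twopi_ennreal_ne _

lemma integrable_haar_of_vol {f : UC → ℂ} (hf : Integrable f volUC) :
    Integrable f haarUC := by
  have hf2 : Integrable f (ENNReal.ofReal (2 * π) • haarUC) :=
    (volume_eq_smul_haarAddCircle (T := 2 * π)) ▸ hf
  exact (integrable_smul_measure twopi_ennreal_ne ENNReal.ofReal_ne_top).mp hf2

lemma norm_fourier (k : ℤ) (x : UC) : ‖(fourier k x : ℂ)‖ = 1 := by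
  rw [fourier_apply]; exact Circle.norm_coe _

lemma integrable_contMul {f : UC → ℂ} (hf : Integrable f haarUC) (g : C(UC, ℂ)) :
    Integrable (fun x => g x * f x) haarUC :=
  hf.bdd_mul g.continuous.aestronglyMeasurable (Eventually.of_forall fun x => g.norm_coe_le_norm x)

lemma integral_cont_mul_eq_zero {f : UC → ℂ} (hf : Integrable f haarUC)
    (h0 : ∀ n : ℤ, fourierCoeff f n = 0) (g : C(UC, ℂ)) :
    ∫ x, g x * f x ∂haarUC = 0 := by
  let Φ : C(UC, ℂ) →L[ℂ] ℂ := LinearMap.mkContinuous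
    { toFun := fun g => ∫ x, g x * f x ∂haarUC
      map_add' := fun g₁ g₂ => by
        simp only [ContinuousMap.add_apply, add_mul]
        exact integral_add (integrable_contMul hf g₁) (integrable_contMul hf g₂)
      map_smul' := fun c g => by
        simp only [ContinuousMap.smul_apply, smul_eq_mul, mul_assoc, RingHom.id_apply]
        rw [integral_const_mul] }
    (∫ x, ‖f x‖ ∂haarUC) (fun g => by
      simp only [LinearMap.coe_mk, AddHom.coe_mk]
      calc ‖∫ x, g x * f x ∂haarUC‖ ≤ ∫ x, ‖g x * f x‖ ∂haarUC :=
            norm_integral_le_integral_norm _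
        _ ≤ ∫ x, ‖g‖ * ‖f x‖ ∂haarUC := by
            apply integral_mono_of_nonneg (Eventually.of_forall fun x => norm_nonneg _)
              (hf.norm.const_mul _) (Eventually.of_forall fun x => ?_)
            show ‖g x * f x‖ ≤ ‖g‖ * ‖f x‖
            rw [norm_mul]
            exact mul_le_mul_of_nonneg_right (g.norm_coe_le_norm x) (norm_nonneg _)
        _ = (∫ x, ‖f x‖ ∂haarUC) * ‖g‖ := by rw [integral_const_mul, mul_comm])
  have hker : (Submodule.span ℂ (Set.range (@fourier (2*π)))).topologicalClosure ≤
      LinearMap.ker (Φ : C(UC, ℂ) →ₗ[ℂ] ℂ) := by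
    apply Submodule.topologicalClosure_minimal
    · rw [Submodule.span_le]
      rintro _ ⟨n, rfl⟩
      simp only [SetLike.mem_coe, LinearMap.mem_ker]
      show ∫ x, fourier n x * f x ∂haarUC = 0
      have h := h0 (-n)
      rw [fourierCoeff] at h
      simpa only [neg_neg, smul_eq_mul] using h
    · exact (ContinuousLinearMap.isClosed_ker Φ)
  have htop : LinearMap.ker (Φ : C(UC, ℂ) →ₗ[ℂ] ℂ) = ⊤ := by
    rw [eq_top_iff, ← span_fourier_closure_eq_top]
    exact hker
  have := LinearMap.ker_eq_top.mp htop
  have := congrFun (congrArg DFunLike.coe this) g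
  simpa [Φ] using this

lemma ae_zero_of_fourierCoeff' {f : UC → ℂ} (hf : Integrable f haarUC)
    (h0 : ∀ n : ℤ, fourierCoeff f n = 0) : f =ᵐ[haarUC] 0 := by
  apply ae_eq_zero_of_forall_setIntegral_isClosed_eq_zero hf
  intro s hs
  have hzero : ∀ n : ℕ, ∫ x, ((hs.apprSeq n x : ℝ) : ℂ) * f x ∂haarUC = 0 := fun n =>
    integral_cont_mul_eq_zero hf h0
      ⟨fun x => ((hs.apprSeq n x : ℝ) : ℂ),
        Complex.continuous_ofReal.comp (NNReal.continuous_coe.comp (hs.apprSeq n).continuous)⟩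
  have hlim : Tendsto (fun n => ∫ x, ((hs.apprSeq n x : ℝ) : ℂ) * f x ∂haarUC) atTop
      (𝓝 (∫ x, s.indicator (fun _ => (1:ℂ)) x * f x ∂haarUC)) := by
    apply tendsto_integral_of_dominated_convergence (fun x => ‖f x‖)
    · intro n
      exact (Complex.continuous_ofReal.comp
        (NNReal.continuous_coe.comp (hs.apprSeq n).continuous)).aestronglyMeasurable.mul
        hf.aestronglyMeasurable
    · exact hf.norm
    · intro n
      refine Eventually.of_forall fun x => ?_
      show ‖((hs.apprSeq n x : ℝ) : ℂ) * f x‖ ≤ ‖f x‖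
      rw [norm_mul]
      have h1 : ‖((hs.apprSeq n x : ℝ) : ℂ)‖ ≤ 1 := by
        rw [Complex.norm_real, Real.norm_eq_abs, NNReal.abs_eq]
        exact_mod_cast HasOuterApproxClosed.apprSeq_apply_le_one hs n x
      calc ‖((hs.apprSeq n x : ℝ) : ℂ)‖ * ‖f x‖ ≤ 1 * ‖f x‖ :=
            mul_le_mul_of_nonneg_right h1 (norm_nonneg _)
        _ = ‖f x‖ := one_mul _
    · refine Eventually.of_forall fun x => ?_
      have hx : Tendsto (fun n => hs.apprSeq n x) atTop
          (𝓝 (s.indicator (fun _ => (1:ℝ≥0)) x)) :=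
        tendsto_pi_nhds.mp (HasOuterApproxClosed.tendsto_apprSeq hs) x
      set c : ℝ≥0 := s.indicator (fun _ => (1:ℝ≥0)) x with hc
      have hx2 : Tendsto (fun n => ((hs.apprSeq n x : ℝ) : ℂ)) atTop (𝓝 ((c : ℝ) : ℂ)) := by
        exact (Complex.continuous_ofReal.tendsto _).comp ((NNReal.continuous_coe.tendsto _).comp hx)
      have heq : ((c : ℝ) : ℂ) = s.indicator (fun _ => (1:ℂ)) x := by
        by_cases hxs : x ∈ s <;> simp [hc, hxs]
      rw [heq] at hx2
      exact hx2.mul_const (f x)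
  have h2 : ∫ x, s.indicator (fun _ => (1:ℂ)) x * f x ∂haarUC = ∫ x in s, f x ∂haarUC := by
    rw [← integral_indicator hs.measurableSet]
    congr 1
    funext x
    by_cases hxs : x ∈ s <;> simp [hxs]
  rw [← h2]
  have this2 : Tendsto (fun _ : ℕ => (0:ℂ)) atTop (𝓝 (∫ x, s.indicator (fun _ => (1:ℂ)) x * f x ∂haarUC)) := by
    simpa [hzero] using hlim
  exact tendsto_nhds_unique this2 tendsto_const_nhds

lemma ae_eq_of_fourierCoeff {f g : UC → ℂ} (hf : Integrable f volUC) (hg : Integrable g volUC)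
    (h : ∀ n : ℤ, fourierCoeff f n = fourierCoeff g n) : f =ᵐ[volUC] g := by
  have hf' := integrable_haar_of_vol hf
  have hg' := integrable_haar_of_vol hg
  have key : (f - g) =ᵐ[haarUC] 0 := by
    apply ae_zero_of_fourierCoeff' (hf'.sub hg')
    intro n
    have hfint : Integrable (fun t => fourier (-n) t • f t) haarUC :=
      hf'.bdd_mul (map_continuous _).aestronglyMeasurable (Eventually.of_forall fun x => (norm_fourier _ _).le)
    have hgint : Integrable (fun t => fourier (-n) t • g t) haarUC :=
      hg'.bdd_mul (map_continuous _).aestronglyMeasurable (Eventually.of_forall fun x => (norm_fourier _ _).le)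
    have : fourierCoeff (f - g) n = fourierCoeff f n - fourierCoeff g n := by
      unfold fourierCoeff
      rw [← integral_sub hfint hgint]
      congr 1
      funext t
      simp [smul_eq_mul, Pi.sub_apply, mul_sub]
    rw [this, h n, sub_self]
  have key2 : (f - g) =ᵐ[volUC] 0 := by unfold Filter.EventuallyEq; rw [haar_ae_eq]; exact key
  filter_upwards [key2] with x hx
  simpa [sub_eq_zero] using hx

lemma memT_mul {a b : UC → ℂ} (ha : MemLp a ⊤ volUC) (hb : MemLp b ⊤ volUC) :
    MemLp (fun t => a t * b t) ⊤ volUC := by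
  simpa [smul_eq_mul, Pi.mul_def] using (hb.smul (r := ⊤) ha)

lemma memT_tilde {a : UC → ℂ} (ha : MemLp a ⊤ volUC) : MemLp (tildeF a) ⊤ volUC :=
  ha.comp_measurePreserving (Measure.measurePreserving_neg volUC)

lemma memT_neg {a : UC → ℂ} (ha : MemLp a ⊤ volUC) : MemLp (fun t => -(a t)) ⊤ volUC := by
  exact ha.neg

lemma coeff_congr {f g : UC → ℂ} (h : f =ᵐ[volUC] g) (n : ℤ) :
    fourierCoeff f n = fourierCoeff g n := by
  unfold fourierCoeff
  refine integral_congr_ae ?_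
  have h' : f =ᵐ[haarUC] g := by
    have := haar_ae_eq ▸ (h : f =ᶠ[ae volUC] g)
    exact this
  filter_upwards [h'] with x hx
  rw [hx]

section OpsLayer
variable {p : ℝ≥0∞} [Fact (1 ≤ p)]

lemma integrableL (f : LpC p) : Integrable (⇑f) volUC := (Lp.memLp f).integrable Fact.out

lemma LpC_ext {f g : LpC p} (h : ∀ n : ℤ, fourierCoeff (⇑f) n = fourierCoeff (⇑g) n) : f = g :=
  Lp.ext (ae_eq_of_fourierCoeff (integrableL f) (integrableL g) h)

lemma integrable_fourier_smul {f : UC → ℂ} (hf : Integrable f haarUC) (k : ℤ) :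
    Integrable (fun t => fourier k t • f t) haarUC :=
  hf.bdd_mul (map_continuous _).aestronglyMeasurable (Eventually.of_forall fun x => (norm_fourier _ _).le)

lemma coeff_fun_add {f g : UC → ℂ} (hf : Integrable f volUC) (hg : Integrable g volUC) (n : ℤ) :
    fourierCoeff (fun t => f t + g t) n = fourierCoeff f n + fourierCoeff g n := by
  unfold fourierCoeff
  rw [← integral_add (integrable_fourier_smul (integrable_haar_of_vol hf) _)
    (integrable_fourier_smul (integrable_haar_of_vol hg) _)]
  congr 1
  funext t
  simp [smul_eq_mul, mul_add]

lemma coeff_add (f g : LpC p) (n : ℤ) :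
    fourierCoeff (⇑(f + g)) n = fourierCoeff (⇑f) n + fourierCoeff (⇑g) n := by
  rw [coeff_congr ((Lp.coeFn_add f g).trans (Eventually.of_forall fun t => rfl) :
        ⇑(f+g) =ᵐ[volUC] fun t => ⇑f t + ⇑g t)]
  exact coeff_fun_add (integrableL f) (integrableL g) n

lemma coeff_zero' (n : ℤ) : fourierCoeff (⇑(0 : LpC p)) n = 0 := by
  rw [coeff_congr (Lp.coeFn_zero ℂ p volUC)]
  unfold fourierCoeff
  simp

lemma coeff_neg (f : LpC p) (n : ℤ) : fourierCoeff (⇑(-f)) n = -fourierCoeff (⇑f) n := by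
  rw [coeff_congr ((Lp.coeFn_neg f).trans (Eventually.of_forall fun t => rfl) :
        ⇑(-f) =ᵐ[volUC] fun t => -(⇑f t))]
  unfold fourierCoeff
  rw [← integral_neg]
  congr 1
  funext t
  simp

lemma coeff_sub (f g : LpC p) (n : ℤ) :
    fourierCoeff (⇑(f - g)) n = fourierCoeff (⇑f) n - fourierCoeff (⇑g) n := by
  rw [sub_eq_add_neg f g, coeff_add, coeff_neg, sub_eq_add_neg]

lemma coeff_comp_neg (f : UC → ℂ) (n : ℤ) :
    fourierCoeff (fun t => f (-t)) n = fourierCoeff f (-n) := by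
  unfold fourierCoeff
  have h1 : (fun t => fourier (-n) t • f (-t)) = fun t => (fun x => fourier n x • f x) (-t) := by
    funext t
    congr 1
    rw [fourier_apply, fourier_apply, smul_neg, neg_zsmul]
  rw [h1, integral_neg_eq_self (fun x => fourier n x • f x) haarUC]
  simp

lemma coeff_fourier_mul (k : ℤ) (g : UC → ℂ) (n : ℤ) :
    fourierCoeff (fun t => fourier k t * g t) n = fourierCoeff g (n - k) := by
  unfold fourierCoeff
  congr 1
  funext t
  rw [smul_eq_mul, smul_eq_mul, ← mul_assoc, ← fourier_add, show -n + k = -(n - k) by ring]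

end OpsLayer


section OpLems
variable {p : ℝ≥0∞} [Fact (1 ≤ p)] (O : CircleOps p)

lemma mat2_apply {E : Type*} [NormedAddCommGroup E] [NormedSpace ℂ E]
    (A B C D : E →L[ℂ] E) (x y : E) : mat2 A B C D (x, y) = (A x + B y, C x + D y) := rfl

lemma Q_apply (f : LpC p) : O.Q f = f - O.P f := rfl

lemma coeff_Q (f : LpC p) (n : ℤ) :
    fourierCoeff (⇑(O.Q f)) n = if 0 ≤ n then 0 else fourierCoeff (⇑f) n := by
  rw [Q_apply, coeff_sub, O.P_spec]
  split_ifs <;> ring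

lemma P_hardy {f : LpC p} (hf : f ∈ HardyS p) : O.P f = f := by
  apply LpC_ext
  intro n
  rw [O.P_spec]
  split_ifs with h
  · rfl
  · exact (hf n (by omega)).symm

lemma P_P (f : LpC p) : O.P (O.P f) = O.P f := by
  apply LpC_ext
  intro n
  rw [O.P_spec, O.P_spec]
  split_ifs <;> rfl

lemma Q_P (f : LpC p) : O.Q (O.P f) = 0 := by
  rw [Q_apply, P_P, sub_self]

lemma P_Q (f : LpC p) : O.P (O.Q f) = 0 := by
  rw [Q_apply, map_sub, P_P, sub_self]

lemma Q_Q (f : LpC p) : O.Q (O.Q f) = O.Q f := by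
  rw [Q_apply O (O.Q f), P_Q, sub_zero]

lemma J_J (f : LpC p) : O.J (O.J f) = f := by
  apply LpC_ext
  intro n
  rw [O.J_spec, O.J_spec, show -(-n - 1) - 1 = n by ring]

lemma P_J_hardy {f : LpC p} (hf : f ∈ HardyS p) : O.P (O.J f) = 0 := by
  apply LpC_ext
  intro n
  rw [O.P_spec, coeff_zero', O.J_spec]
  split_ifs with h
  · exact hf _ (by omega)
  · rfl

lemma Q_J_hardy {f : LpC p} (hf : f ∈ HardyS p) : O.Q (O.J f) = O.J f := by
  rw [Q_apply, P_J_hardy O hf, sub_zero]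

lemma J_P (f : LpC p) : O.J (O.P f) = O.Q (O.J f) := by
  apply LpC_ext
  intro n
  rw [O.J_spec, O.P_spec, coeff_Q O, O.J_spec]
  rcases le_or_gt 0 n with h | h
  · rw [if_neg (by omega), if_pos h]
  · rw [if_pos (by omega), if_neg (by omega)]

lemma J_ae (f : LpC p) : ⇑(O.J f) =ᵐ[volUC] fun t => fourier (-1) t * ⇑f (-t) := by
  have h1 : Integrable (fun t => ⇑f (-t)) volUC :=
    ((Measure.measurePreserving_neg volUC).integrable_comp
      (integrableL f).aestronglyMeasurable).mpr (integrableL f)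
  have hint : Integrable (fun t => fourier (-1) t * ⇑f (-t)) volUC :=
    h1.bdd_mul (map_continuous _).aestronglyMeasurable (Eventually.of_forall fun x => (norm_fourier _ _).le)
  apply ae_eq_of_fourierCoeff (integrableL (O.J f)) hint
  intro n
  rw [O.J_spec, coeff_fourier_mul (-1) (fun t => ⇑f (-t)) n, coeff_comp_neg,
    show -(n - -1) = -n - 1 by ring]

lemma J_M {a : UC → ℂ} (ha : MemLp a ⊤ volUC) (f : LpC p) :
    O.J (O.M a f) = O.M (tildeF a) (O.J f) := by
  apply LpC_ext
  intro n
  rw [O.J_spec]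
  rw [coeff_congr (O.M_spec a ha f) (-n-1)]
  have htilde : MemLp (tildeF a) ⊤ volUC := memT_tilde ha
  have h2 : fourierCoeff (⇑(O.M (tildeF a) (O.J f))) n
      = fourierCoeff (fun t => tildeF a t * (fourier (-1) t * ⇑f (-t))) n := by
    refine coeff_congr ?_ n
    filter_upwards [O.M_spec (tildeF a) htilde (O.J f), J_ae O f] with t hh1 hh2
    rw [hh1, hh2]
  rw [h2]
  have h3 : (fun t => tildeF a t * (fourier (-1) t * ⇑f (-t)))
      = fun t => fourier (-1) t * ((fun s => a s * ⇑f s) (-t)) := by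
    funext t
    simp only [tildeF]
    ring
  rw [h3, coeff_fourier_mul (-1) (fun s => (fun u => a u * ⇑f u) (-s)) n,
    coeff_comp_neg (fun u => a u * ⇑f u) (n - -1), show -(n - -1) = -n - 1 by ring]

end OpLems

lemma clm_inverse_apply {E : Type*} [NormedAddCommGroup E] [NormedSpace ℂ E]
    (A : E →L[ℂ] E) (h : IsUnit A) {x y : E} (hxy : A x = y) : Ring.inverse A y = x := by
  have h2 := Ring.inverse_mul_cancel A h
  have h3 := congrArg (fun T => T x) h2
  simpa [ContinuousLinearMap.mul_apply, hxy] using h3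

end Aux

/-- Lemma 2.1: if `ℛ x₀ = y` on `H^p × H^p`, then
`X₀ = (φ+ψ, P(b̃(φ+ψ) + ã J(φ-ψ)))` solves `𝒫 V(a,b) 𝒫 X = Y` with
`Y = 𝒫 A₂⁻¹ A₁⁻¹ 𝒥⁻¹ y`. -/
theorem stmt0 (p : ℝ≥0∞) [Fact (1 ≤ p)] (hp : 1 < p) (hp' : p ≠ ⊤)
    (a b atinv : UC → ℂ)
    (ha : MemLp a ⊤ volUC) (hb : MemLp b ⊤ volUC) (hatinv : MemLp atinv ⊤ volUC)
    (hai : ∀ᵐ t ∂volUC, tildeF a t * atinv t = 1)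
    (O : CircleOps p)
    (hA1 : IsUnit (O.A1 a b)) (hA2 : IsUnit (O.A2 a b atinv))
    (g h φ ψ : LpC p)
    (hg : g ∈ HardyS p) (hh : h ∈ HardyS p)
    (hφ : φ ∈ HardyS p) (hψ : ψ ∈ HardyS p)
    (hsol : O.Rdiag a b (φ, ψ) = (g, h)) :
    O.TV a b atinv
        (φ + ψ, O.P (O.M (tildeF b) (φ + ψ) + O.M (tildeF a) (O.J (φ - ψ))))
      = O.PP (Ring.inverse (O.A2 a b atinv) (Ring.inverse (O.A1 a b) (O.Jinv (g, h)))) := by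
  classical
  -- notation
  set u : LpC p := φ + ψ with hu_def
  set vv : LpC p := O.J (φ - ψ) with hvv_def
  set s : LpC p := O.M (tildeF b) u + O.M (tildeF a) vv with hs_def
  set w1 : LpC p := g + h with hw1_def
  set w2 : LpC p := O.J (g - h) with hw2_def
  -- membership facts
  have hbt : MemLp (tildeF b) ⊤ volUC := memT_tilde hb
  have hat : MemLp (tildeF a) ⊤ volUC := memT_tilde ha
  have hv11 : MemLp (fun t => a t - b t * tildeF b t * atinv t) ⊤ volUC :=
    ha.sub (memT_mul (memT_mul hb hbt) hatinv)
  have hv12 : MemLp (fun t => b t * atinv t) ⊤ volUC := memT_mul hb hatinv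
  have hv21 : MemLp (fun t => -(tildeF b t * atinv t)) ⊤ volUC :=
    memT_neg (memT_mul hbt hatinv)
  -- Hardy facts
  have hu : u ∈ HardyS p := by
    intro n hn
    rw [hu_def, coeff_add, hφ n hn, hψ n hn, add_zero]
  have hgh : w1 ∈ HardyS p := by
    intro n hn
    rw [hw1_def, coeff_add, hg n hn, hh n hn, add_zero]
  have hφψ : (φ - ψ) ∈ HardyS p := by
    intro n hn
    rw [coeff_sub, hφ n hn, hψ n hn, sub_zero]
  have hgmh : (g - h) ∈ HardyS p := by
    intro n hn
    rw [coeff_sub, hg n hn, hh n hn, sub_zero]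
  have hPu : O.P u = u := P_hardy O hu
  have hPvv : O.P vv = 0 := P_J_hardy O hφψ
  have hPw1 : O.P w1 = w1 := P_hardy O hgh
  have hQw1 : O.Q w1 = 0 := by rw [Q_apply, hPw1, sub_self]
  have hPw2 : O.P w2 = 0 := P_J_hardy O hgmh
  have hQw2 : O.Q w2 = w2 := by rw [Q_apply, hPw2, sub_zero]
  -- decompose hsol
  rw [CircleOps.Rdiag, mat2_apply] at hsol
  simp only [ContinuousLinearMap.zero_apply, add_zero, zero_add, Prod.mk.injEq] at hsol
  obtain ⟨hsol1, hsol2⟩ := hsol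
  have hg' : g = O.P (O.M a φ + O.M b (O.J φ)) := by
    rw [← hsol1, ContinuousLinearMap.add_apply, CircleOps.Toep, CircleOps.Hank]
    simp only [ContinuousLinearMap.comp_apply]
    rw [P_hardy O hφ, Q_J_hardy O hφ, map_add]
  have hh' : h = O.P (O.M a ψ - O.M b (O.J ψ)) := by
    rw [← hsol2, ContinuousLinearMap.sub_apply, CircleOps.Toep, CircleOps.Hank]
    simp only [ContinuousLinearMap.comp_apply]
    rw [P_hardy O hψ, Q_J_hardy O hψ, map_sub]
  have hw1 : w1 = O.P (O.M a u + O.M b vv) := by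
    rw [hw1_def, hg', hh', ← map_add]
    congr 1
    rw [hu_def, hvv_def, map_add (O.M a), map_sub O.J, map_sub (O.M b)]
    abel
  have hw2 : w2 = O.Q s := by
    have hgmh' : g - h = O.P (O.M a (φ - ψ) + O.M b (O.J u)) := by
      rw [hg', hh', ← map_sub]
      congr 1
      rw [map_sub (O.M a), hu_def, map_add O.J, map_add (O.M b)]
      abel
    rw [hw2_def, hgmh', J_P, map_add, J_M O ha, J_M O hb, J_J, hs_def]
    rw [← hvv_def]
    congr 1
    exact add_comm _ _
  -- coe of s
  have hs_coe : ⇑s =ᵐ[volUC] fun t => tildeF b t * ⇑u t + tildeF a t * ⇑vv t := by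
    rw [hs_def]
    filter_upwards [Lp.coeFn_add (O.M (tildeF b) u) (O.M (tildeF a) vv),
      O.M_spec (tildeF b) hbt u, O.M_spec (tildeF a) hat vv] with t h1 h2 h3
    rw [h1, Pi.add_apply, h2, h3]
  -- the two row identities
  have hrow1 : O.M (fun t => a t - b t * tildeF b t * atinv t) u
      + O.M (fun t => b t * atinv t) s = O.M a u + O.M b vv := by
    apply Lp.ext (p := p) (μ := volUC)
    filter_upwards [Lp.coeFn_add (O.M (fun t => a t - b t * tildeF b t * atinv t) u)
        (O.M (fun t => b t * atinv t) s),
      O.M_spec _ hv11 u, O.M_spec _ hv12 s,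
      Lp.coeFn_add (O.M a u) (O.M b vv), O.M_spec a ha u, O.M_spec b hb vv,
      hs_coe, hai] with t h1 h2 h3 h4 h5 h6 h7 h8
    rw [h1, Pi.add_apply, h2, h3, h4, Pi.add_apply, h5, h6, h7]
    linear_combination (b t * ⇑vv t) * h8
  have hrow2 : O.M (fun t => -(tildeF b t * atinv t)) u + O.M atinv s = vv := by
    apply Lp.ext (p := p) (μ := volUC)
    filter_upwards [Lp.coeFn_add (O.M (fun t => -(tildeF b t * atinv t)) u) (O.M atinv s),
      O.M_spec _ hv21 u, O.M_spec atinv hatinv s, hs_coe, hai] with t h1 h2 h3 h4 h5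
    rw [h1, Pi.add_apply, h2, h3, h4]
    linear_combination (⇑vv t) * h5
  -- RHS computation
  have hJinv : O.Jinv (g, h) = (w1, w2) := by
    rw [CircleOps.Jinv, mat2_apply]
    simp only [ContinuousLinearMap.comp_apply, ContinuousLinearMap.id_apply,
      ContinuousLinearMap.neg_apply]
    rw [hw1_def, hw2_def, map_sub, sub_eq_add_neg]
  have hA1w : O.A1 a b (w1, w2) = (w1, w2) := by
    rw [CircleOps.A1]
    simp only [ContinuousLinearMap.sub_apply, ContinuousLinearMap.id_apply, mat2_apply,
      ContinuousLinearMap.comp_apply]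
    rw [hQw1, hPw2]
    simp
  have hRinv1 : Ring.inverse (O.A1 a b) (O.Jinv (g, h)) = (w1, w2) := by
    rw [hJinv]
    exact clm_inverse_apply _ hA1 hA1w
  -- the element u2
  set t1 : LpC p := O.P (O.M (fun t => a t - b t * tildeF b t * atinv t) u)
      + O.P (O.M (fun t => b t * atinv t) (O.P s)) with ht1_def
  set t2 : LpC p := O.P (O.M (fun t => -(tildeF b t * atinv t)) u)
      + O.P (O.M atinv (O.P s)) with ht2_def
  have hQt1 : O.Q t1 = 0 := by
    rw [ht1_def, map_add, Q_P, Q_P, add_zero]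
  have hQt2 : O.Q t2 = 0 := by
    rw [ht2_def, map_add, Q_P, Q_P, add_zero]
  have hPt1 : O.P t1 = t1 := by
    rw [ht1_def, map_add, P_P, P_P]
  have hPt2 : O.P t2 = t2 := by
    rw [ht2_def, map_add, P_P, P_P]
  have hPsQw2 : O.P s + w2 = s := by
    rw [hw2, Q_apply]
    abel
  have hA2u2 : O.A2 a b atinv (t1, t2 + O.Q w2) = (w1, w2) := by
    rw [CircleOps.A2]
    simp only [ContinuousLinearMap.add_apply, ContinuousLinearMap.id_apply, CircleOps.PVQ,
      mat2_apply, ContinuousLinearMap.comp_apply]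
    have hq2 : O.Q (t2 + O.Q w2) = w2 := by
      rw [map_add, hQt2, Q_Q, hQw2, zero_add]
    rw [hQt1, hq2]
    simp only [map_zero, zero_add]
    have hc1 : t1 + O.P ((O.M fun t => b t * atinv t) w2) = w1 := by
      rw [ht1_def, add_assoc, ← map_add O.P, ← map_add (O.M (fun t => b t * atinv t)), hPsQw2,
        ← map_add O.P, hrow1, ← hw1]
    have hc2 : t2 + O.Q w2 + O.P ((O.M atinv) w2) = w2 := by
      have hkey : t2 + O.P ((O.M atinv) w2) = 0 := by
        rw [ht2_def, add_assoc, ← map_add O.P, ← map_add (O.M atinv), hPsQw2,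
          ← map_add O.P, hrow2, hPvv]
      calc t2 + O.Q w2 + O.P ((O.M atinv) w2)
          = (t2 + O.P ((O.M atinv) w2)) + O.Q w2 := by abel
        _ = 0 + O.Q w2 := by rw [hkey]
        _ = w2 := by rw [zero_add, hQw2]
    rw [Prod.mk_add_mk, hc1, hc2]
  have hRinv2 : Ring.inverse (O.A2 a b atinv) (w1, w2) = (t1, t2 + O.Q w2) :=
    clm_inverse_apply _ hA2 hA2u2
  rw [hRinv1, hRinv2]
  rw [CircleOps.TV, mat2_apply, CircleOps.PP, mat2_apply]
  simp only [CircleOps.Toep, ContinuousLinearMap.comp_apply, ContinuousLinearMap.zero_apply,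
    add_zero, zero_add]
  rw [hPu, P_P]
  rw [map_add O.P t2 (O.Q w2), hPt2, P_Q, add_zero, hPt1, ht1_def, ht2_def]


end
end

section
/- Let 1<p<∞, a,b ∈ L^∞(𝕋), f ∈ H^p(𝕋), and n ∈ ℕ. If the equation (T(a)+H(b))φ = f is solvable and φ₀ is a solution, then the equation (T(t^{-n}a) + H(t^n b))ψ = f is also solvable and possesses a solution ψ₀ belonging to the image of the operator T(t^n): H^p(𝕋) → H^p(𝕋); in fact ψ₀ := T(t^n)φ₀ is such a solution. -/
open MeasureTheory Complex Real BigOperators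
open scoped ENNReal

noncomputable section

namespace Stmt6Aux

lemma twopi_pos : (0:ℝ) < 2 * π := by positivity

lemma ae_haar_of_ae_vol {Pr : UC → Prop} (h : ∀ᵐ t ∂volUC, Pr t) :
    ∀ᵐ t ∂(@AddCircle.haarAddCircle (2*π) _), Pr t := by
  have hac : (@AddCircle.haarAddCircle (2*π) _) ≪ volUC := by
    rw [show (volUC : Measure UC) = ENNReal.ofReal (2*π) • AddCircle.haarAddCircle from
      AddCircle.volume_eq_smul_haarAddCircle]
    exact Measure.absolutelyContinuous_smul (by simp [Real.pi_pos, twopi_pos])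
  exact hac.ae_le h

lemma fourierCoeff_congr_vol {f g : UC → ℂ} (h : f =ᵐ[volUC] g) (n : ℤ) :
    fourierCoeff f n = fourierCoeff g n := by
  unfold fourierCoeff
  exact integral_congr_ae <| (ae_haar_of_ae_vol h).mono fun t ht => by simp only [ht]

lemma integrable_haar {f : UC → ℂ} (h : Integrable f volUC) :
    Integrable f (@AddCircle.haarAddCircle (2*π) _) := by
  rw [show (volUC : Measure UC) = ENNReal.ofReal (2*π) • AddCircle.haarAddCircle from
    AddCircle.volume_eq_smul_haarAddCircle] at h
  exact (integrable_smul_measure (ENNReal.ofReal_pos.2 twopi_pos).ne' ENNReal.ofReal_ne_top).1 h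

lemma fourierCoeff_sub {f g : UC → ℂ} (hf : Integrable f volUC) (hg : Integrable g volUC)
    (n : ℤ) : fourierCoeff (f - g) n = fourierCoeff f n - fourierCoeff g n := by
  unfold fourierCoeff
  have hib : ∀ {u : UC → ℂ}, Integrable u volUC →
      Integrable (fun t => fourier (-n) t • u t) (@AddCircle.haarAddCircle (2*π) _) := by
    intro u hu
    exact (integrable_haar hu).bdd_mul (map_continuous _).aestronglyMeasurable
      (c := 1) (.of_forall fun x => by simp [Circle.norm_coe])
  simp only [Pi.sub_apply, smul_sub]
  exact integral_sub (hib hf) (hib hg)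

end Stmt6Aux

namespace Stmt6Aux

lemma integral_fourier_mul_eq_zero {h : UC → ℂ} (hI : Integrable h volUC)
    (hc : ∀ n : ℤ, fourierCoeff h n = 0) (k : ℤ) :
    ∫ t, fourier k t * h t ∂volUC = 0 := by
  have h0 := hc (-k)
  unfold fourierCoeff at h0
  rw [neg_neg] at h0
  rw [show (volUC : Measure UC) = ENNReal.ofReal (2*π) • AddCircle.haarAddCircle from
    AddCircle.volume_eq_smul_haarAddCircle, integral_smul_measure]
  simp only [smul_eq_mul] at h0 ⊢
  rw [h0, smul_zero]

lemma ae_zero_of_fourierCoeff_zero {h : UC → ℂ} (hI : Integrable h volUC)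
    (hc : ∀ n : ℤ, fourierCoeff h n = 0) : h =ᵐ[volUC] 0 := by
  have hint : ∀ φ : C(UC, ℂ), Integrable (fun t => φ t * h t) volUC := fun φ =>
    hI.bdd_mul φ.continuous.aestronglyMeasurable (c := ‖φ‖) (.of_forall fun x => φ.norm_coe_le_norm x)
  let Φl : C(UC, ℂ) →ₗ[ℂ] ℂ :=
    { toFun := fun φ => ∫ t, φ t * h t ∂volUC
      map_add' := fun φ ψ => by
        simp only [ContinuousMap.add_apply, add_mul]
        exact integral_add (hint φ) (hint ψ)
      map_smul' := fun c φ => by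
        simp only [ContinuousMap.smul_apply, smul_eq_mul, mul_assoc, RingHom.id_apply]
        exact integral_const_mul c _ }
  let Φ : C(UC, ℂ) →L[ℂ] ℂ := Φl.mkContinuous (∫ t, ‖h t‖ ∂volUC) (fun φ => by
    calc ‖∫ t, φ t * h t ∂volUC‖ ≤ ∫ t, ‖φ t * h t‖ ∂volUC := norm_integral_le_integral_norm _
    _ ≤ ∫ t, ‖φ‖ * ‖h t‖ ∂volUC := by
        refine integral_mono_of_nonneg (.of_forall fun t => norm_nonneg _)
          (hI.norm.const_mul _) (.of_forall fun t => ?_)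
        show ‖φ t * h t‖ ≤ ‖φ‖ * ‖h t‖
        rw [norm_mul]
        gcongr
        exact φ.norm_coe_le_norm t
    _ = (∫ t, ‖h t‖ ∂volUC) * ‖φ‖ := by rw [integral_const_mul]; ring)
  have hker : ∀ φ : C(UC, ℂ), ∫ t, φ t * h t ∂volUC = 0 := by
    have hsub : Set.range (@fourier (2*π)) ⊆ (LinearMap.ker (Φ : C(UC, ℂ) →ₗ[ℂ] ℂ) : Set C(UC, ℂ)) := by
      rintro - ⟨k, rfl⟩
      exact integral_fourier_mul_eq_zero hI hc k
    have hspan : Submodule.span ℂ (Set.range (@fourier (2*π))) ≤ LinearMap.ker (Φ : C(UC, ℂ) →ₗ[ℂ] ℂ) :=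
      Submodule.span_le.mpr hsub
    have hcl : (Submodule.span ℂ (Set.range (@fourier (2*π)))).topologicalClosure ≤
        LinearMap.ker (Φ : C(UC, ℂ) →ₗ[ℂ] ℂ) :=
      Submodule.topologicalClosure_minimal _ hspan (ContinuousLinearMap.isClosed_ker Φ)
    intro φ
    have hφ : φ ∈ (Submodule.span ℂ (Set.range (@fourier (2*π)))).topologicalClosure := by
      rw [span_fourier_closure_eq_top]; trivial
    exact hcl hφ
  have hclosed : ∀ s : Set UC, IsClosed s → ∫ t in s, h t ∂volUC = 0 := by
    intro s hs
    rcases s.eq_empty_or_nonempty with rfl | hne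
    · simp
    · set φk : ℕ → C(UC, ℂ) := fun k =>
        ⟨fun t => ((max (1 - k * Metric.infDist t s) 0 : ℝ) : ℂ),
          Complex.continuous_ofReal.comp (((continuous_const.sub
            (continuous_const.mul (Metric.continuous_infDist_pt s))).max continuous_const))⟩ with hφk
      have hbd : ∀ k t, ‖(φk k) t‖ ≤ 1 := by
        intro k t
        simp only [hφk, ContinuousMap.coe_mk, Complex.norm_real]
        rw [Real.norm_eq_abs, _root_.abs_of_nonneg (le_max_right (1 - (k:ℝ) * Metric.infDist t s) 0)]
        refine max_le ?_ zero_le_one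
        have h0 : 0 ≤ (k : ℝ) * Metric.infDist t s :=
          mul_nonneg (Nat.cast_nonneg k) Metric.infDist_nonneg
        linarith
      have hptw : ∀ t, Filter.Tendsto (fun k => (φk k) t * h t) Filter.atTop
          (nhds (s.indicator h t)) := by
        intro t
        by_cases ht : t ∈ s
        · have heq : ∀ k : ℕ, (φk k) t * h t = h t := by
            intro k
            have h0 : Metric.infDist t s = 0 := Metric.infDist_zero_of_mem ht
            simp [hφk, h0]
          rw [Set.indicator_of_mem ht]
          simp only [heq]
          exact tendsto_const_nhds
        · have hd : 0 < Metric.infDist t s := (hs.notMem_iff_infDist_pos hne).1 ht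
          have hev : ∀ᶠ k : ℕ in Filter.atTop, (φk k) t * h t = 0 := by
            filter_upwards [Filter.eventually_ge_atTop ⌈1 / Metric.infDist t s⌉₊] with k hk
            have hk' : 1 / Metric.infDist t s ≤ (k : ℝ) :=
              le_trans (Nat.le_ceil _) (by exact_mod_cast hk)
            have h1 : 1 ≤ (k : ℝ) * Metric.infDist t s := by
              rw [div_le_iff₀ hd] at hk'
              linarith
            have hmax : max (1 - (k : ℝ) * Metric.infDist t s) 0 = 0 :=
              max_eq_right (by linarith)
            simp [hφk, hmax]
          rw [Set.indicator_of_notMem ht]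
          exact Filter.Tendsto.congr' (hev.mono fun k hk => hk.symm) tendsto_const_nhds
      have hlim := tendsto_integral_of_dominated_convergence (μ := volUC)
        (F := fun k t => (φk k) t * h t) (bound := fun t => ‖h t‖)
        (fun k => ((φk k).continuous.aestronglyMeasurable.mul hI.1))
        hI.norm
        (fun k => .of_forall fun t => by
          rw [norm_mul]
          calc ‖(φk k) t‖ * ‖h t‖ ≤ 1 * ‖h t‖ := by gcongr; exact hbd k t
          _ = ‖h t‖ := one_mul _)
        (.of_forall hptw)
      have h0 : (fun k : ℕ => ∫ t, (φk k) t * h t ∂volUC) = fun _ => (0 : ℂ) := by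
        funext k; exact hker (φk k)
      rw [h0] at hlim
      have huniq := tendsto_nhds_unique tendsto_const_nhds hlim
      rw [← integral_indicator hs.measurableSet]
      exact huniq.symm
  exact ae_eq_zero_of_forall_setIntegral_isClosed_eq_zero hI hclosed

end Stmt6Aux

namespace Stmt6Aux

lemma LpC_ext {p : ℝ≥0∞} [Fact (1 ≤ p)] (f g : LpC p)
    (h : ∀ n : ℤ, fourierCoeff (⇑f) n = fourierCoeff (⇑g) n) : f = g := by
  have hfI : Integrable (⇑f) volUC := (Lp.memLp f).integrable Fact.out
  have hgI : Integrable (⇑g) volUC := (Lp.memLp g).integrable Fact.out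
  have hsub : ∀ n : ℤ, fourierCoeff (⇑(f - g)) n = 0 := by
    intro n
    rw [fourierCoeff_congr_vol (Lp.coeFn_sub f g) n, fourierCoeff_sub hfI hgI, h n, sub_self]
  have hzero : (⇑(f - g)) =ᵐ[volUC] 0 :=
    ae_zero_of_fourierCoeff_zero ((hfI.sub hgI).congr (Lp.coeFn_sub f g).symm) hsub
  have : f - g = 0 := Lp.ext (hzero.trans (Lp.coeFn_zero ℂ p volUC).symm)
  exact sub_eq_zero.mp this

lemma fourierCoeff_tpow_mul (k : ℤ) (F : UC → ℂ) (m : ℤ) :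
    fourierCoeff (fun t => tpow k t * F t) m = fourierCoeff F (m - k) := by
  unfold fourierCoeff
  refine integral_congr_ae (Filter.Eventually.of_forall fun t => ?_)
  show fourier (-m) t • (tpow k t * F t) = fourier (-(m - k)) t • F t
  have hmul : fourier (-m) t * tpow k t = fourier (-(m - k)) t := by
    rw [tpow, ← fourier_add]
    congr 1
    ring_nf
  rw [smul_eq_mul, smul_eq_mul, ← mul_assoc, hmul]

lemma tpow_neg_mul_self (k : ℤ) (t : UC) : tpow (-k) t * tpow k t = 1 := by
  rw [tpow, tpow, ← fourier_add, neg_add_cancel, fourier_zero]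

lemma memTop_tpow (k : ℤ) : MemLp (tpow k) ⊤ volUC := by
  refine memLp_top_of_bound (map_continuous (fourier k)).aestronglyMeasurable 1
    (Filter.Eventually.of_forall fun t => ?_)
  simp [tpow, Circle.norm_coe]

lemma memTop_mul {u v : UC → ℂ} (hu : MemLp u ⊤ volUC) (hv : MemLp v ⊤ volUC) :
    MemLp (fun t => u t * v t) ⊤ volUC := by
  have := hv.smul (φ := u) (p := ⊤) (r := ⊤) hu
  exact this

end Stmt6Aux

open Stmt6Aux

/-- Lemma 3.6: if `(T(a)+H(b))φ = f` is solvable with solution `φ₀`, then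
`(T(t^{-n}a) + H(t^n b))ψ = f` is solvable with the solution `ψ₀ = T(t^n)φ₀`, which belongs to
the image of `T(t^n) : H^p → H^p`. -/
theorem stmt6 (p : ℝ≥0∞) [Fact (1 ≤ p)] (hp : 1 < p) (hp' : p ≠ ⊤)
    (a b : UC → ℂ) (ha : MemLp a ⊤ volUC) (hb : MemLp b ⊤ volUC)
    (O : CircleOps p) (n : ℕ)
    (f φ₀ : LpC p) (hf : f ∈ HardyS p) (hφ : φ₀ ∈ HardyS p)
    (hsol : (O.Toep a + O.Hank b) φ₀ = f) :
    O.Toep (tpow (n : ℤ)) φ₀ ∈ HardyS p ∧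
    O.Toep (tpow (n : ℤ)) φ₀ ∈ O.Toep (tpow (n : ℤ)) '' HardyS p ∧
    (O.Toep (fun t => tpow (-(n : ℤ)) t * a t) + O.Hank (fun t => tpow (n : ℤ) t * b t))
        (O.Toep (tpow (n : ℤ)) φ₀) = f := by
  set N : ℤ := (n : ℤ) with hN
  -- basic coefficient facts
  have hPc : ∀ (g : LpC p) (m : ℤ),
      fourierCoeff (⇑(O.P g)) m = if 0 ≤ m then fourierCoeff (⇑g) m else 0 := O.P_spec
  have hPid : ∀ g : LpC p, g ∈ HardyS p → O.P g = g := by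
    intro g hg
    refine LpC_ext _ _ fun m => ?_
    rw [hPc g m]
    by_cases h0 : 0 ≤ m
    · rw [if_pos h0]
    · rw [if_neg h0, hg m (not_le.mp h0)]
  have hQc : ∀ (g : LpC p) (m : ℤ),
      fourierCoeff (⇑(O.Q g)) m = if 0 ≤ m then 0 else fourierCoeff (⇑g) m := by
    intro g m
    have hQg : O.Q g = g - O.P g := by
      simp [CircleOps.Q, ContinuousLinearMap.sub_apply]
    rw [hQg, fourierCoeff_congr_vol (Lp.coeFn_sub g (O.P g)) m,
      fourierCoeff_sub ((Lp.memLp g).integrable Fact.out)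
        ((Lp.memLp (O.P g)).integrable Fact.out), hPc g m]
    by_cases h0 : 0 ≤ m <;> simp [h0]
  -- the function ψ = χ_N φ₀
  set ψ : LpC p := O.M (tpow N) φ₀ with hψdef
  have hψ_ae : ⇑ψ =ᵐ[volUC] fun t => tpow N t * φ₀ t := O.M_spec _ (memTop_tpow N) φ₀
  have hψc : ∀ m : ℤ, fourierCoeff (⇑ψ) m = fourierCoeff (⇑φ₀) (m - N) := fun m =>
    (fourierCoeff_congr_vol hψ_ae m).trans (fourierCoeff_tpow_mul N (⇑φ₀) m)
  have hNnn : 0 ≤ N := Int.ofNat_nonneg n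
  have hψH : ψ ∈ HardyS p := by
    intro m hm
    rw [hψc m]
    exact hφ _ (by omega)
  have hToep_apply : ∀ (c : UC → ℂ) (g : LpC p), O.Toep c g = O.P (O.M c (O.P g)) := by
    intro c g; rfl
  have hψ₀ : O.Toep (tpow N) φ₀ = ψ := by
    rw [hToep_apply, hPid φ₀ hφ, ← hψdef, hPid ψ hψH]
  -- Goal 1 and 2
  refine ⟨by rw [hψ₀]; exact hψH, ⟨φ₀, hφ, rfl⟩, ?_⟩
  rw [hψ₀]
  -- Toeplitz part
  have haN : MemLp (fun t => tpow (-N) t * a t) ⊤ volUC := memTop_mul (memTop_tpow _) ha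
  have hbN : MemLp (fun t => tpow N t * b t) ⊤ volUC := memTop_mul (memTop_tpow _) hb
  have hMa : O.M (fun t => tpow (-N) t * a t) ψ = O.M a φ₀ := by
    refine Lp.ext ?_
    have h1 := O.M_spec _ haN ψ
    have h2 := O.M_spec a ha φ₀
    refine h1.trans (.trans ?_ h2.symm)
    filter_upwards [hψ_ae] with t ht
    rw [ht]
    calc tpow (-N) t * a t * (tpow N t * φ₀ t)
        = (tpow (-N) t * tpow N t) * (a t * φ₀ t) := by ring
      _ = a t * φ₀ t := by rw [tpow_neg_mul_self, one_mul]
  have hT : O.Toep (fun t => tpow (-N) t * a t) ψ = O.Toep a φ₀ := by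
    rw [hToep_apply, hPid ψ hψH, hMa, hToep_apply, hPid φ₀ hφ]
  -- Hankel part
  have hHank_apply : ∀ (c : UC → ℂ) (g : LpC p),
      O.Hank c g = O.P (O.M c (O.Q (O.J g))) := by intro c g; rfl
  have hJψc : ∀ m : ℤ, fourierCoeff (⇑(O.J ψ)) m = fourierCoeff (⇑φ₀) (-m - 1 - N) := by
    intro m
    rw [O.J_spec ψ m, hψc (-m - 1)]
  have hJφc : ∀ m : ℤ, fourierCoeff (⇑(O.J φ₀)) m = fourierCoeff (⇑φ₀) (-m - 1) :=
    fun m => O.J_spec φ₀ m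
  have hQJψ : O.Q (O.J ψ) = O.J ψ := by
    refine LpC_ext _ _ fun m => ?_
    rw [hQc (O.J ψ) m]
    by_cases h0 : 0 ≤ m
    · rw [if_pos h0, hJψc m, hφ _ (by omega)]
    · rw [if_neg h0]
  have hQJφ : O.Q (O.J φ₀) = O.J φ₀ := by
    refine LpC_ext _ _ fun m => ?_
    rw [hQc (O.J φ₀) m]
    by_cases h0 : 0 ≤ m
    · rw [if_pos h0, hJφc m, hφ _ (by omega)]
    · rw [if_neg h0]
  have hJψ_eq : O.J ψ = O.M (tpow (-N)) (O.J φ₀) := by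
    refine LpC_ext _ _ fun m => ?_
    rw [hJψc m, fourierCoeff_congr_vol (O.M_spec _ (memTop_tpow (-N)) (O.J φ₀)) m,
      fourierCoeff_tpow_mul (-N) _ (m), hJφc (m - -N)]
    congr 1
    ring
  have hMb : O.M (fun t => tpow N t * b t) (O.Q (O.J ψ)) = O.M b (O.Q (O.J φ₀)) := by
    rw [hQJψ, hQJφ, hJψ_eq]
    refine Lp.ext ?_
    have h1 := O.M_spec _ hbN (O.M (tpow (-N)) (O.J φ₀))
    have h2 := O.M_spec b hb (O.J φ₀)
    refine h1.trans (.trans ?_ h2.symm)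
    filter_upwards [O.M_spec _ (memTop_tpow (-N)) (O.J φ₀)] with t ht
    rw [ht]
    calc tpow N t * b t * (tpow (-N) t * (O.J φ₀) t)
        = (tpow (-N) t * tpow N t) * (b t * (O.J φ₀) t) := by ring
      _ = b t * (O.J φ₀) t := by rw [tpow_neg_mul_self, one_mul]
  have hH : O.Hank (fun t => tpow N t * b t) ψ = O.Hank b φ₀ := by
    rw [hHank_apply, hMb, hHank_apply]
  rw [ContinuousLinearMap.add_apply, hT, hH, ← ContinuousLinearMap.add_apply, hsol]

end
end

section
/- Let 1<p<∞, a,b ∈ L^∞(𝕋), f ∈ H^p(𝕋), and n ∈ ℕ. If the equation (T(t^{-n}a) + H(t^n b))ψ = f is solvable and has a solution ψ₀ belonging to the image of the operator T(t^n): H^p(𝕋) → H^p(𝕋), then the equation (T(a)+H(b))φ = f is also solvable and φ₀ := T(t^{-n})ψ₀ is one of its solutions. -/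
open MeasureTheory Complex Real BigOperators
open scoped ENNReal

noncomputable section

namespace Stmt8Aux

open AddCircle Filter

local notation "μH" => (haarAddCircle : Measure UC)

lemma twopi_ne : (ENNReal.ofReal (2 * π)) ≠ 0 := by
  simp only [ne_eq, ENNReal.ofReal_eq_zero, not_le]
  positivity

lemma vol_eq_smul : (volUC : Measure UC) = ENNReal.ofReal (2 * π) • μH :=
  volume_eq_smul_haarAddCircle

lemma ae_vol_iff {q : UC → Prop} : (∀ᵐ t ∂volUC, q t) ↔ ∀ᵐ t ∂μH, q t := by
  rw [vol_eq_smul]; simp only [ae_iff, Measure.smul_apply, smul_eq_mul, mul_eq_zero, twopi_ne, false_or]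

lemma integrable_haar {f : UC → ℂ} (hf : Integrable f volUC) : Integrable f μH := by
  have h : μH = (ENNReal.ofReal (2 * π))⁻¹ • (volUC : Measure UC) := by
    rw [vol_eq_smul, smul_smul, ENNReal.inv_mul_cancel twopi_ne ENNReal.ofReal_ne_top, one_smul]
  rw [h]
  exact hf.smul_measure (ENNReal.inv_ne_top.mpr twopi_ne)

lemma coeff_congr {f g : UC → ℂ} (h : f =ᵐ[volUC] g) (n : ℤ) :
    fourierCoeff f n = fourierCoeff g n := by
  unfold fourierCoeff
  refine integral_congr_ae ?_
  filter_upwards [ae_vol_iff.mp h] with t ht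
  rw [ht]

lemma coeff_shift (u : UC → ℂ) (k m : ℤ) :
    fourierCoeff (fun t => tpow k t * u t) m = fourierCoeff u (m - k) := by
  unfold fourierCoeff
  refine integral_congr_ae (Eventually.of_forall fun t => ?_)
  simp only [smul_eq_mul, tpow, ← mul_assoc, ← fourier_add]
  have : -m + k = -(m - k) := by ring
  rw [this]

lemma memTop_tpow (k : ℤ) : MemLp (tpow k) ⊤ volUC :=
  memLp_top_of_bound ((fourier k).continuous.aestronglyMeasurable) 1
    (Eventually.of_forall fun t => by
      simp only [tpow]
      exact le_of_eq (Circle.norm_coe _))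

lemma memTop_mul {u v : UC → ℂ} (hu : MemLp u ⊤ volUC) (hv : MemLp v ⊤ volUC) :
    MemLp (fun t => u t * v t) ⊤ volUC := by
  have := MemLp.smul (p := ⊤) (q := ⊤) (r := ⊤) hv hu
  exact this

lemma ae_zero_of_coeff_zero {f : UC → ℂ} (hf : Integrable f volUC)
    (h0 : ∀ n : ℤ, fourierCoeff f n = 0) : f =ᵐ[volUC] 0 := by
  have hfh : Integrable f μH := integrable_haar hf
  have hint : ∀ g : C(UC, ℂ), Integrable (fun t => g t * f t) μH := fun g =>
    hfh.bdd_mul g.continuous.aestronglyMeasurable (Eventually.of_forall fun t => g.norm_coe_le_norm t)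
  -- Step 1: the integral of `g * f` vanishes for every continuous `g`.
  have step1 : ∀ g : C(UC, ℂ), ∫ t, g t * f t ∂μH = 0 := by
    let L : C(UC, ℂ) →ₗ[ℂ] ℂ :=
      { toFun := fun g => ∫ t, g t * f t ∂μH
        map_add' := fun g h => by
          simp only [ContinuousMap.add_apply, add_mul]
          exact integral_add (hint g) (hint h)
        map_smul' := fun c g => by
          simp only [ContinuousMap.smul_apply, smul_eq_mul, mul_assoc, RingHom.id_apply]
          exact integral_const_mul c _ }
    have hbound : ∀ g : C(UC, ℂ), ‖L g‖ ≤ (∫ t, ‖f t‖ ∂μH) * ‖g‖ := by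
      intro g
      calc ‖∫ t, g t * f t ∂μH‖ ≤ ∫ t, ‖g t * f t‖ ∂μH := norm_integral_le_integral_norm _
        _ ≤ ∫ t, ‖g‖ * ‖f t‖ ∂μH := by
            refine integral_mono (hint g).norm (hfh.norm.const_mul _) fun t => ?_
            rw [norm_mul]
            exact mul_le_mul_of_nonneg_right (g.norm_coe_le_norm t) (norm_nonneg _)
        _ = (∫ t, ‖f t‖ ∂μH) * ‖g‖ := by rw [integral_const_mul]; ring
    let Lc : C(UC, ℂ) →L[ℂ] ℂ := L.mkContinuous _ hbound
    intro g
    have hker : (Submodule.span ℂ (Set.range (@fourier (2 * π)))).topologicalClosure ≤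
        LinearMap.ker (Lc : C(UC, ℂ) →ₗ[ℂ] ℂ) := by
      refine Submodule.topologicalClosure_minimal _ ?_ ?_
      · rw [Submodule.span_le]
        rintro x ⟨k, rfl⟩
        have : Lc (fourier k) = fourierCoeff f (-k) := by
          show (∫ t, fourier k t * f t ∂μH) = _
          unfold fourierCoeff
          simp only [smul_eq_mul, neg_neg]
        simp only [SetLike.mem_coe, LinearMap.mem_ker, ContinuousLinearMap.coe_coe]
        rw [this, h0]
      · exact ContinuousLinearMap.isClosed_ker Lc
    have : g ∈ LinearMap.ker (Lc : C(UC, ℂ) →ₗ[ℂ] ℂ) := by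
      apply hker
      rw [span_fourier_closure_eq_top]
      trivial
    exact this
  -- Step 2: all set integrals of `f` vanish.
  have step2 : ∀ s : Set UC, MeasurableSet s → ∫ t in s, f t ∂μH = 0 := by
    intro s hs
    have hind : MemLp (s.indicator fun _ => (1 : ℝ)) 2 μH :=
      memLp_indicator_const 2 hs 1 (Or.inr (measure_ne_top _ _))
    set I2 : Lp ℝ 2 μH := hind.toLp _ with hI2
    have hdense := ContinuousMap.toLp_denseRange (α := UC) (E := ℝ) (μ := μH) (𝕜 := ℝ)
      (p := 2) (by norm_num)
    have hseq : ∀ k : ℕ, ∃ g : C(UC, ℝ),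
        ‖ContinuousMap.toLp 2 μH ℝ g - I2‖ < 1 / (k + 1) := by
      intro k
      obtain ⟨y, ⟨g, rfl⟩, hy⟩ := Metric.mem_closure_iff.mp (hdense I2) (1 / (k + 1))
        (by positivity)
      exact ⟨g, by rwa [dist_comm, dist_eq_norm] at hy⟩
    choose g hg using hseq
    have htend0 : Tendsto (fun k : ℕ => ‖ContinuousMap.toLp 2 μH ℝ (g k) - I2‖)
        atTop (nhds 0) := by
      refine squeeze_zero (fun k => norm_nonneg _) (fun k => (hg k).le) ?_
      exact tendsto_one_div_add_atTop_nhds_zero_nat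
    have heLp : Tendsto
        (fun k : ℕ => eLpNorm ((g k : UC → ℝ) - s.indicator fun _ => (1 : ℝ)) 2 μH)
        atTop (nhds 0) := by
      have heq : ∀ k : ℕ, eLpNorm ((g k : UC → ℝ) - s.indicator fun _ => (1 : ℝ)) 2 μH
          = ENNReal.ofReal ‖ContinuousMap.toLp 2 μH ℝ (g k) - I2‖ := by
        intro k
        have hae : ((g k : UC → ℝ) - s.indicator fun _ => (1 : ℝ))
            =ᵐ[μH] ⇑(ContinuousMap.toLp 2 μH ℝ (g k) - I2) := by
          filter_upwards [MeasureTheory.Lp.coeFn_sub (ContinuousMap.toLp 2 μH ℝ (g k)) I2,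
            ContinuousMap.coeFn_toLp (p := 2) (𝕜 := ℝ) μH (g k), hind.coeFn_toLp] with t h1 h2 h3
          simp only [Pi.sub_apply] at h1 ⊢
          rw [h1, h2, hI2, h3]
        rw [eLpNorm_congr_ae hae, MeasureTheory.Lp.norm_def,
          ENNReal.ofReal_toReal (MeasureTheory.Lp.eLpNorm_ne_top _)]
      simp only [heq]
      have : Tendsto (fun x : ℝ => ENNReal.ofReal x) (nhds 0) (nhds 0) := by
        simpa using ENNReal.continuous_ofReal.tendsto 0
      exact this.comp htend0
    have hmeas := tendstoInMeasure_of_tendsto_eLpNorm_of_ne_top (two_ne_zero)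
      (by norm_num) (fun k => (g k).continuous.aestronglyMeasurable)
      ((stronglyMeasurable_const.indicator hs).aestronglyMeasurable) heLp
    obtain ⟨ns, _, hns⟩ := hmeas.exists_seq_tendsto_ae
    -- dominated convergence
    have key : Tendsto
        (fun k => ∫ t, ((max 0 (min 1 (g (ns k) t)) : ℝ) : ℂ) * f t ∂μH) atTop
        (nhds (∫ t, ((s.indicator (fun _ => (1 : ℝ)) t : ℝ) : ℂ) * f t ∂μH)) := by
      refine tendsto_integral_of_dominated_convergence (fun t => ‖f t‖) ?_ hfh.norm ?_ ?_
      · intro k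
        exact (Complex.continuous_ofReal.comp
          ((continuous_const.max (continuous_const.min (g (ns k)).continuous)))).aestronglyMeasurable.mul
          hfh.aestronglyMeasurable
      · intro k
        refine Eventually.of_forall fun t => ?_
        rw [norm_mul, Complex.norm_real, Real.norm_eq_abs]
        have h1 : |max 0 (min 1 (g (ns k) t))| ≤ 1 := by
          rw [abs_le]
          constructor
          · have := le_max_left (0:ℝ) (min 1 (g (ns k) t))
            linarith
          · exact max_le (by norm_num) (min_le_left _ _)
        calc |max 0 (min 1 (g (ns k) t))| * ‖f t‖ ≤ 1 * ‖f t‖ :=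
              mul_le_mul_of_nonneg_right h1 (norm_nonneg _)
          _ = ‖f t‖ := one_mul _
      · filter_upwards [hns] with t ht
        have hcont : Continuous fun y : ℝ => ((max 0 (min 1 y) : ℝ) : ℂ) * f t :=
          (Complex.continuous_ofReal.comp
            (continuous_const.max (continuous_const.min continuous_id))).mul continuous_const
        have := (hcont.tendsto (s.indicator (fun _ => (1 : ℝ)) t)).comp ht
        have hval : max 0 (min 1 (s.indicator (fun _ => (1 : ℝ)) t))
            = s.indicator (fun _ => (1 : ℝ)) t := by
          by_cases hts : t ∈ s <;> simp [Set.indicator_apply, hts]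
        rw [hval] at this
        exact this
    have hzero : ∀ k : ℕ, (∫ t, ((max 0 (min 1 (g (ns k) t)) : ℝ) : ℂ) * f t ∂μH) = 0 := by
      intro k
      exact step1 (ContinuousMap.mk (fun t => ((max 0 (min 1 (g (ns k) t)) : ℝ) : ℂ))
        (Complex.continuous_ofReal.comp
          (continuous_const.max (continuous_const.min (g (ns k)).continuous))))
    have hlim : (∫ t, ((s.indicator (fun _ => (1 : ℝ)) t : ℝ) : ℂ) * f t ∂μH) = 0 := by
      have := key
      simp only [hzero] at this
      exact tendsto_nhds_unique this tendsto_const_nhds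
    rw [← integral_indicator hs]
    rw [← hlim]
    refine integral_congr_ae (Eventually.of_forall fun t => ?_)
    by_cases hts : t ∈ s <;> simp [Set.indicator_apply, hts]
  have hae : f =ᵐ[μH] 0 :=
    hfh.ae_eq_zero_of_forall_setIntegral_eq_zero fun s hs _ => step2 s hs
  exact ae_vol_iff.mpr hae

variable {p : ℝ≥0∞} [Fact (1 ≤ p)]

lemma integrable_LpC (g : LpC p) : Integrable (⇑g) volUC :=
  (MeasureTheory.Lp.memLp g).integrable Fact.out

lemma coeff_Lp_zero (n : ℤ) : fourierCoeff (⇑(0 : LpC p)) n = 0 := by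
  rw [coeff_congr (MeasureTheory.Lp.coeFn_zero ℂ p volUC) n]
  unfold fourierCoeff
  simp

lemma Lp_ext_coeff {g h : LpC p}
    (hc : ∀ n : ℤ, fourierCoeff (⇑g) n = fourierCoeff (⇑h) n) : g = h := by
  have hgi := integrable_haar (integrable_LpC g)
  have hhi := integrable_haar (integrable_LpC h)
  have hsub : Integrable (fun t => g t - h t) volUC :=
    (integrable_LpC g).sub (integrable_LpC h)
  have h0 : ∀ n : ℤ, fourierCoeff (fun t => g t - h t) n = 0 := by
    intro n
    have hi1 : Integrable (fun t => fourier (-n) t * g t) μH :=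
      hgi.bdd_mul (fourier (-n)).continuous.aestronglyMeasurable
        (Eventually.of_forall fun t => le_of_eq (Circle.norm_coe _))
    have hi2 : Integrable (fun t => fourier (-n) t * h t) μH :=
      hhi.bdd_mul (fourier (-n)).continuous.aestronglyMeasurable
        (Eventually.of_forall fun t => le_of_eq (Circle.norm_coe _))
    have : fourierCoeff (fun t => g t - h t) n
        = fourierCoeff (⇑g) n - fourierCoeff (⇑h) n := by
      unfold fourierCoeff
      simp only [smul_eq_mul, mul_sub]
      exact integral_sub hi1 hi2
    rw [this, hc n, sub_self]
  have hae := ae_zero_of_coeff_zero hsub h0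
  refine MeasureTheory.Lp.ext ?_
  filter_upwards [hae] with t ht
  exact sub_eq_zero.mp ht

end Stmt8Aux

/-- Lemma 3.8: if `(T(t^{-n}a) + H(t^n b))ψ = f` has a solution `ψ₀` in the
image of `T(t^n) : H^p → H^p`, then `(T(a)+H(b))φ = f` is solvable and `φ₀ = T(t^{-n})ψ₀` is
one of its solutions. -/
theorem stmt8 (p : ℝ≥0∞) [Fact (1 ≤ p)] (hp : 1 < p) (hp' : p ≠ ⊤)
    (a b : UC → ℂ) (ha : MemLp a ⊤ volUC) (hb : MemLp b ⊤ volUC)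
    (O : CircleOps p) (n : ℕ)
    (f ψ₀ : LpC p) (hf : f ∈ HardyS p)
    (hψ : ψ₀ ∈ O.Toep (tpow (n : ℤ)) '' HardyS p)
    (hsol : (O.Toep (fun t => tpow (-(n : ℤ)) t * a t) + O.Hank (fun t => tpow (n : ℤ) t * b t))
        ψ₀ = f) :
    O.Toep (tpow (-(n : ℤ))) ψ₀ ∈ HardyS p ∧
    (O.Toep a + O.Hank b) (O.Toep (tpow (-(n : ℤ))) ψ₀) = f := by
  clear hp hp' hf
  obtain ⟨χ, hχH, hχψ⟩ := hψ
  have hta : MemLp (fun t => tpow (-(n : ℤ)) t * a t) ⊤ volUC :=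
    Stmt8Aux.memTop_mul (Stmt8Aux.memTop_tpow _) ha
  have htb : MemLp (fun t => tpow (n : ℤ) t * b t) ⊤ volUC :=
    Stmt8Aux.memTop_mul (Stmt8Aux.memTop_tpow _) hb
  -- `P` fixes elements of the Hardy space
  have Pfix : ∀ g : LpC p, g ∈ HardyS p → O.P g = g := by
    intro g hg
    apply Stmt8Aux.Lp_ext_coeff
    intro k
    rw [O.P_spec]
    split
    · rfl
    · next hk => exact (hg k (not_le.mp hk)).symm
  have hχP : O.P χ = χ := Pfix χ hχH
  -- `ψ₀ = M (t^n) χ`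
  have hMχ_coeff : ∀ k : ℤ, fourierCoeff (⇑(O.M (tpow (n : ℤ)) χ)) k
      = fourierCoeff (⇑χ) (k - n) := by
    intro k
    rw [Stmt8Aux.coeff_congr (O.M_spec _ (Stmt8Aux.memTop_tpow _) χ) k, Stmt8Aux.coeff_shift]
  have hMχ_H : O.M (tpow (n : ℤ)) χ ∈ HardyS p := by
    intro k hk
    rw [hMχ_coeff k]
    exact hχH _ (by omega)
  have hψ0 : ψ₀ = O.M (tpow (n : ℤ)) χ := by
    rw [← hχψ]
    show O.P (O.M (tpow (n : ℤ)) (O.P χ)) = _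
    rw [hχP]
    exact Pfix _ hMχ_H
  have hψ0_coeff : ∀ k : ℤ, fourierCoeff (⇑ψ₀) k = fourierCoeff (⇑χ) (k - n) := by
    intro k; rw [hψ0]; exact hMχ_coeff k
  have hψ0H : ψ₀ ∈ HardyS p := hψ0 ▸ hMχ_H
  have hψ0P : O.P ψ₀ = ψ₀ := Pfix _ hψ0H
  have hψ0_ae : ⇑ψ₀ =ᵐ[volUC] fun t => tpow (n : ℤ) t * ⇑χ t := by
    rw [hψ0]; exact O.M_spec _ (Stmt8Aux.memTop_tpow _) χ
  -- `T(t^{-n}) ψ₀ = χ`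
  have hφχ : O.Toep (tpow (-(n : ℤ))) ψ₀ = χ := by
    apply Stmt8Aux.Lp_ext_coeff
    intro k
    show fourierCoeff (⇑(O.P (O.M (tpow (-(n : ℤ))) (O.P ψ₀)))) k = _
    rw [hψ0P, O.P_spec]
    split
    · rw [Stmt8Aux.coeff_congr (O.M_spec _ (Stmt8Aux.memTop_tpow _) ψ₀) k,
        Stmt8Aux.coeff_shift, hψ0_coeff]
      congr 1
      ring
    · next hk => exact (hχH k (not_le.mp hk)).symm
  -- `J` facts
  have hJψ : O.J ψ₀ = O.M (tpow (-(n : ℤ))) (O.J χ) := by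
    apply Stmt8Aux.Lp_ext_coeff
    intro k
    rw [O.J_spec, Stmt8Aux.coeff_congr (O.M_spec _ (Stmt8Aux.memTop_tpow _) (O.J χ)) k,
      Stmt8Aux.coeff_shift, O.J_spec, hψ0_coeff]
    congr 1
    ring
  have hPJχ : O.P (O.J χ) = 0 := by
    apply Stmt8Aux.Lp_ext_coeff
    intro k
    rw [O.P_spec, Stmt8Aux.coeff_Lp_zero]
    split
    · next hk => rw [O.J_spec]; exact hχH _ (by omega)
    · rfl
  have hPJψ : O.P (O.J ψ₀) = 0 := by
    apply Stmt8Aux.Lp_ext_coeff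
    intro k
    rw [O.P_spec, Stmt8Aux.coeff_Lp_zero]
    split
    · next hk => rw [O.J_spec, hψ0_coeff]; exact hχH _ (by omega)
    · rfl
  have hQJχ : O.Q (O.J χ) = O.J χ := by
    have h : O.Q (O.J χ) = O.J χ - O.P (O.J χ) := by
      simp [CircleOps.Q, ContinuousLinearMap.sub_apply]
    rw [h, hPJχ, sub_zero]
  have hQJψ : O.Q (O.J ψ₀) = O.J ψ₀ := by
    have h : O.Q (O.J ψ₀) = O.J ψ₀ - O.P (O.J ψ₀) := by
      simp [CircleOps.Q, ContinuousLinearMap.sub_apply]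
    rw [h, hPJψ, sub_zero]
  -- cancellation of `t^n` against `t^{-n}`
  have hcancel : ∀ t : UC, tpow (-(n : ℤ)) t * tpow (n : ℤ) t = 1 := by
    intro t
    rw [tpow, tpow, ← fourier_add]
    norm_num
  -- multiplication operator identities
  have hMa : O.M (fun t => tpow (-(n : ℤ)) t * a t) ψ₀ = O.M a χ := by
    apply MeasureTheory.Lp.ext
    refine (O.M_spec _ hta ψ₀).trans (Filter.EventuallyEq.trans ?_ (O.M_spec a ha χ).symm)
    filter_upwards [hψ0_ae] with t ht
    rw [ht]
    calc tpow (-(n : ℤ)) t * a t * (tpow (n : ℤ) t * ⇑χ t)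
        = (tpow (-(n : ℤ)) t * tpow (n : ℤ) t) * (a t * ⇑χ t) := by ring
      _ = a t * ⇑χ t := by rw [hcancel, one_mul]
  have hMb : O.M (fun t => tpow (n : ℤ) t * b t) (O.J ψ₀) = O.M b (O.J χ) := by
    apply MeasureTheory.Lp.ext
    have hae : ⇑(O.J ψ₀) =ᵐ[volUC] fun t => tpow (-(n : ℤ)) t * ⇑(O.J χ) t := by
      rw [hJψ]; exact O.M_spec _ (Stmt8Aux.memTop_tpow _) _
    refine (O.M_spec _ htb _).trans (Filter.EventuallyEq.trans ?_ (O.M_spec b hb _).symm)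
    filter_upwards [hae] with t ht
    rw [ht]
    calc tpow (n : ℤ) t * b t * (tpow (-(n : ℤ)) t * ⇑(O.J χ) t)
        = (tpow (-(n : ℤ)) t * tpow (n : ℤ) t) * (b t * ⇑(O.J χ) t) := by ring
      _ = b t * ⇑(O.J χ) t := by rw [hcancel, one_mul]
  -- the two operator application identities
  have h1 : O.Toep (fun t => tpow (-(n : ℤ)) t * a t) ψ₀ = O.Toep a χ := by
    show O.P (O.M _ (O.P ψ₀)) = O.P (O.M a (O.P χ))
    rw [hψ0P, hχP, hMa]
  have h2 : O.Hank (fun t => tpow (n : ℤ) t * b t) ψ₀ = O.Hank b χ := by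
    show O.P (O.M _ (O.Q (O.J ψ₀))) = O.P (O.M b (O.Q (O.J χ)))
    rw [hQJψ, hQJχ, hMb]
  constructor
  · rw [hφχ]; exact hχH
  · rw [hφχ]
    rw [ContinuousLinearMap.add_apply] at hsol ⊢
    rw [← h1, ← h2]
    exact hsol

end
end
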